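/- Let T be a bounded linear operator on a complex Banach space with spectral radius at most 1, satisfying the Ritt resolvent condition ‖(zI − T)⁻¹‖ ≤ C/|z − 1| for all |z| > 1 and some constant C. Then T is power-bounded: there exists K such that ‖T^n‖ ≤ K for all n ≥ 0. -/

import Mathlib

open Filter Topology

section Aux

variable {A : Type*} [NormedRing A] [NormedAlgebra ℂ A] [CompleteSpace A]

/-- Growth bound from Gelfand's formula. -/
lemma aux_growth (a : A) (h : spectralRadius ℂ a ≤ 1) {ρ : ℝ} (hρ : 1 < ρ) :
    ∃ M : ℝ, 1 ≤ M ∧ ∀ k : ℕ, ‖a ^ k‖ ≤ M * ρ ^ k := by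
  have htend := spectrum.pow_norm_pow_one_div_tendsto_nhds_spectralRadius a
  have hlt : spectralRadius ℂ a < ENNReal.ofReal ρ :=
    lt_of_le_of_lt h (by simpa using ENNReal.one_lt_ofReal.mpr hρ)
  have hev : ∀ᶠ n : ℕ in atTop, ENNReal.ofReal (‖a ^ n‖ ^ (1 / n : ℝ)) < ENNReal.ofReal ρ :=
    htend.eventually_lt_const hlt
  obtain ⟨N, hN⟩ := hev.exists_forall_of_atTop
  refine ⟨1 + ∑ k ∈ Finset.range (N + 1), ‖a ^ k‖, ?_, ?_⟩
  · have : 0 ≤ ∑ k ∈ Finset.range (N + 1), ‖a ^ k‖ :=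
      Finset.sum_nonneg fun _ _ => norm_nonneg _
    linarith
  intro k
  have hM0 : (0:ℝ) ≤ ∑ j ∈ Finset.range (N + 1), ‖a ^ j‖ :=
    Finset.sum_nonneg fun _ _ => norm_nonneg _
  have hρk : (1:ℝ) ≤ ρ ^ k := one_le_pow₀ hρ.le
  by_cases hk : k ≤ N
  · have h1 : ‖a ^ k‖ ≤ ∑ j ∈ Finset.range (N + 1), ‖a ^ j‖ :=
      Finset.single_le_sum (fun j _ => norm_nonneg (a ^ j))
        (Finset.mem_range.mpr (Nat.lt_succ_of_le hk))
    calc ‖a ^ k‖ ≤ (1 + ∑ j ∈ Finset.range (N + 1), ‖a ^ j‖) * 1 := by linarith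
    _ ≤ (1 + ∑ j ∈ Finset.range (N + 1), ‖a ^ j‖) * ρ ^ k := by
        apply mul_le_mul_of_nonneg_left hρk; linarith
  · push_neg at hk
    have hk1 : k ≠ 0 := by omega
    have := hN k hk.le
    rw [ENNReal.ofReal_lt_ofReal_iff (by linarith)] at this
    have hx : ‖a ^ k‖ ≤ ρ ^ k := by
      have h0 : (0:ℝ) ≤ ‖a ^ k‖ := norm_nonneg _
      have h2 := Real.rpow_le_rpow (Real.rpow_nonneg h0 _) this.le
        (by positivity : (0:ℝ) ≤ (k:ℝ))
      rw [← Real.rpow_mul h0] at h2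
      rw [one_div, inv_mul_cancel₀ (by exact_mod_cast hk1 : (k:ℝ) ≠ 0), Real.rpow_one] at h2
      calc ‖a ^ k‖ ≤ ρ ^ ((k:ℕ):ℝ) := h2
      _ = ρ ^ k := by rw [Real.rpow_natCast]
    calc ‖a ^ k‖ ≤ ρ ^ k := hx
    _ ≤ (1 + ∑ j ∈ Finset.range (N + 1), ‖a ^ j‖) * ρ ^ k := by nlinarith


/-- Summability of the norms of the resolvent Neumann series. -/
lemma aux_summable_norm (a : A) (h : spectralRadius ℂ a ≤ 1) {w : ℂ} (hw : 1 < ‖w‖) :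
    Summable fun k : ℕ => ‖(w⁻¹) ^ (k + 1) • a ^ k‖ := by
  obtain ⟨ρ, hρ1, hρw⟩ : ∃ ρ : ℝ, 1 < ρ ∧ ρ < ‖w‖ :=
    ⟨(1 + ‖w‖) / 2, by linarith, by linarith⟩
  obtain ⟨M, hM1, hM⟩ := aux_growth a h hρ1
  have hw0 : (0:ℝ) < ‖w‖ := by linarith
  have hx1 : ρ / ‖w‖ < 1 := (div_lt_one hw0).mpr hρw
  have hx0 : 0 ≤ ρ / ‖w‖ := by positivity
  refine Summable.of_nonneg_of_le (fun k => norm_nonneg _)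
    (fun k => ?_) (((summable_geometric_of_lt_one hx0 hx1).mul_left (M / ‖w‖)))
  have : ‖(w⁻¹) ^ (k + 1) • a ^ k‖ = ‖w‖⁻¹ ^ (k + 1) * ‖a ^ k‖ := by
    rw [norm_smul, norm_pow, norm_inv]
  rw [this]
  have hb : ‖w‖⁻¹ ^ (k + 1) * ‖a ^ k‖ ≤ ‖w‖⁻¹ ^ (k + 1) * (M * ρ ^ k) := by
    apply mul_le_mul_of_nonneg_left (hM k) (by positivity)
  refine hb.trans (le_of_eq ?_)
  rw [pow_succ]
  field_simp
  ring

/-- The Neumann series sums to the resolvent. -/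
lemma aux_hasSum (a : A) (h : spectralRadius ℂ a ≤ 1) {w : ℂ} (hw : 1 < ‖w‖) :
    HasSum (fun k : ℕ => (w⁻¹) ^ (k + 1) • a ^ k)
      (Ring.inverse (algebraMap ℂ A w - a)) := by
  have hw0 : w ≠ 0 := by
    intro hw0; rw [hw0, norm_zero] at hw; linarith
  have hsum : Summable fun k : ℕ => (w⁻¹) ^ (k + 1) • a ^ k :=
    (aux_summable_norm a h hw).of_norm
  set S : A := ∑' k : ℕ, (w⁻¹) ^ (k + 1) • a ^ k with hSdef
  have hS : HasSum (fun k : ℕ => (w⁻¹) ^ (k + 1) • a ^ k) S := hsum.hasSum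
  -- the partial "telescoping" function
  set g : ℕ → A := fun k => (w⁻¹) ^ k • a ^ k with hgdef
  have hgtend : Tendsto g atTop (𝓝 0) := by
    rw [tendsto_zero_iff_norm_tendsto_zero]
    obtain ⟨ρ, hρ1, hρw⟩ : ∃ ρ : ℝ, 1 < ρ ∧ ρ < ‖w‖ :=
      ⟨(1 + ‖w‖) / 2, by linarith, by linarith⟩
    obtain ⟨M, hM1, hM⟩ := aux_growth a h hρ1
    have hw0' : (0:ℝ) < ‖w‖ := by linarith
    have hx1 : ρ / ‖w‖ < 1 := (div_lt_one hw0').mpr hρw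
    have hx0 : 0 ≤ ρ / ‖w‖ := by positivity
    have hb : ∀ k : ℕ, ‖g k‖ ≤ M * (ρ / ‖w‖) ^ k := by
      intro k
      have : ‖g k‖ = ‖w‖⁻¹ ^ k * ‖a ^ k‖ := by
        simp only [hgdef, norm_smul, norm_pow, norm_inv]
      rw [this]
      have := mul_le_mul_of_nonneg_left (hM k) (by positivity : (0:ℝ) ≤ ‖w‖⁻¹ ^ k)
      refine this.trans (le_of_eq ?_)
      rw [div_pow]
      ring
    have htend0 : Tendsto (fun k : ℕ => M * (ρ / ‖w‖) ^ k) atTop (𝓝 0) := by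
      simpa using (tendsto_pow_atTop_nhds_zero_of_lt_one hx0 hx1).const_mul M
    exact squeeze_zero (fun k => norm_nonneg _) hb htend0
  have key : ∀ b : A, (∀ k : ℕ, b * ((w⁻¹) ^ (k + 1) • a ^ k) = g k - g (k + 1)) →
      b * S = 1 := by
    intro b hb
    have h1 : HasSum (fun k => b * ((w⁻¹) ^ (k + 1) • a ^ k)) (b * S) := hS.mul_left b
    have h2 := h1.tendsto_sum_nat
    have h3 : Tendsto (fun n => ∑ k ∈ Finset.range n, b * ((w⁻¹) ^ (k + 1) • a ^ k))
        atTop (𝓝 (g 0 - 0)) := by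
      have heq : ∀ n, ∑ k ∈ Finset.range n, b * ((w⁻¹) ^ (k + 1) • a ^ k) = g 0 - g n := by
        intro n
        rw [Finset.sum_congr rfl fun k _ => hb k]
        exact Finset.sum_range_sub' g n
      rw [funext heq]
      exact tendsto_const_nhds.sub hgtend
    have := tendsto_nhds_unique h2 h3
    rw [this]
    simp only [hgdef, pow_zero, one_smul, sub_zero]
  have key' : ∀ b : A, (∀ k : ℕ, ((w⁻¹) ^ (k + 1) • a ^ k) * b = g k - g (k + 1)) →
      S * b = 1 := by
    intro b hb
    have h1 : HasSum (fun k => ((w⁻¹) ^ (k + 1) • a ^ k) * b) (S * b) := hS.mul_right b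
    have h2 := h1.tendsto_sum_nat
    have h3 : Tendsto (fun n => ∑ k ∈ Finset.range n, ((w⁻¹) ^ (k + 1) • a ^ k) * b)
        atTop (𝓝 (g 0 - 0)) := by
      have heq : ∀ n, ∑ k ∈ Finset.range n, ((w⁻¹) ^ (k + 1) • a ^ k) * b = g 0 - g n := by
        intro n
        rw [Finset.sum_congr rfl fun k _ => hb k]
        exact Finset.sum_range_sub' g n
      rw [funext heq]
      exact tendsto_const_nhds.sub hgtend
    have := tendsto_nhds_unique h2 h3
    rw [this]
    simp only [hgdef, pow_zero, one_smul, sub_zero]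
  have hterm : ∀ k : ℕ, (algebraMap ℂ A w - a) * ((w⁻¹) ^ (k + 1) • a ^ k)
      = g k - g (k + 1) := by
    intro k
    rw [sub_mul]
    have h1 : algebraMap ℂ A w * ((w⁻¹) ^ (k + 1) • a ^ k) = g k := by
      rw [← Algebra.smul_def, smul_smul, hgdef]
      congr 1
      rw [pow_succ', ← mul_assoc, mul_inv_cancel₀ hw0, one_mul]
    have h2 : a * ((w⁻¹) ^ (k + 1) • a ^ k) = g (k + 1) := by
      rw [mul_smul_comm, hgdef, ← pow_succ']
    rw [h1, h2]
  have hterm' : ∀ k : ℕ, ((w⁻¹) ^ (k + 1) • a ^ k) * (algebraMap ℂ A w - a)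
      = g k - g (k + 1) := by
    intro k
    rw [mul_sub]
    have h1 : ((w⁻¹) ^ (k + 1) • a ^ k) * algebraMap ℂ A w = g k := by
      rw [← Algebra.commutes, ← Algebra.smul_def, smul_smul, hgdef]
      congr 1
      rw [pow_succ', ← mul_assoc, mul_inv_cancel₀ hw0, one_mul]
    have h2 : ((w⁻¹) ^ (k + 1) • a ^ k) * a = g (k + 1) := by
      rw [smul_mul_assoc, hgdef, ← pow_succ]
    rw [h1, h2]
  have hmul : (algebraMap ℂ A w - a) * S = 1 := key _ hterm
  have hmul' : S * (algebraMap ℂ A w - a) = 1 := key' _ hterm'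
  have : Ring.inverse (algebraMap ℂ A w - a) = S := by
    let u : Aˣ := ⟨algebraMap ℂ A w - a, S, hmul, hmul'⟩
    have hu : (algebraMap ℂ A w - a) = (u : A) := rfl
    rw [hu, Ring.inverse_unit]
    rfl
  rw [this]
  exact hS

open MeasureTheory in
/-- Integral of a character over `(0, 2π]`. -/
lemma aux_int_exp (m : ℤ) :
    ∫ θ in Set.Ioc (0:ℝ) (2 * Real.pi), Complex.exp ((m:ℂ) * (θ * Complex.I))
      = if (m:ℂ) = 0 then ((2 * Real.pi : ℝ) : ℂ) else 0 := by
  have h2π : (0:ℝ) ≤ 2 * Real.pi := by positivity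
  by_cases hm : (m:ℂ) = 0
  · rw [if_pos hm]
    simp only [hm, zero_mul, Complex.exp_zero]
    rw [setIntegral_const]
    rw [measureReal_def, Real.volume_Ioc]
    rw [ENNReal.toReal_ofReal (by linarith)]
    simp
  · rw [if_neg hm]
    have hio : ∫ θ in Set.Ioc (0:ℝ) (2 * Real.pi), Complex.exp ((m:ℂ) * (θ * Complex.I))
        = ∫ θ in (0:ℝ)..(2 * Real.pi), Complex.exp (((m:ℂ) * Complex.I) * θ) := by
      rw [intervalIntegral.integral_of_le h2π]
      congr 1
      ext θ
      ring_nf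
    rw [hio, integral_exp_mul_complex (by simp [hm, Complex.I_ne_zero])]
    have h1 : Complex.exp ((m:ℂ) * Complex.I * ((2 * Real.pi : ℝ) : ℂ)) = 1 := by
      have := Complex.exp_int_mul_two_pi_mul_I m
      rw [← this]
      congr 1
      push_cast
      ring
    rw [h1]
    simp

/-- Counting the antidiagonal via a `tsum`. -/
lemma aux_tsum_ite {V : Type*} [AddCommGroup V] [TopologicalSpace V] [T2Space V]
    (n : ℕ) (v : V) :
    ∑' p : ℕ × ℕ, (if p.1 + p.2 = n then v else 0) = (n + 1) • v := by
  rw [tsum_eq_sum (s := Finset.range (n+1) ×ˢ Finset.range (n+1))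
    (fun p hp => by
      rw [if_neg]
      intro hpn
      exact hp (by
        rw [Finset.mem_product, Finset.mem_range, Finset.mem_range]
        omega))]
  rw [Finset.sum_product]
  have hinner : ∀ i ∈ Finset.range (n+1),
      (∑ j ∈ Finset.range (n+1), if i + j = n then v else 0) = v := by
    intro i hi
    rw [Finset.mem_range] at hi
    have hco : ∀ j ∈ Finset.range (n+1),
        (if i + j = n then v else 0) = (if j = n - i then v else 0) := by
      intro j _
      exact if_congr (by omega) rfl rfl
    rw [Finset.sum_congr rfl hco, Finset.sum_ite_eq' (Finset.range (n+1)) (n-i) (fun _ => v)]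
    rw [if_pos (Finset.mem_range.mpr (by omega))]
  rw [Finset.sum_congr rfl hinner, Finset.sum_const, Finset.card_range]

/-- Geometric series for `(z-1)⁻¹`. -/
lemma aux_scalar_inv {z : ℂ} (hz : 1 < ‖z‖) :
    HasSum (fun j : ℕ => (z⁻¹) ^ (j + 1)) ((z - 1)⁻¹) := by
  have hz0 : z ≠ 0 := by intro h0; rw [h0, norm_zero] at hz; linarith
  have hlt : ‖z⁻¹‖ < 1 := by
    rw [norm_inv]
    rw [inv_lt_one_iff₀]
    right; exact hz
  have hg := hasSum_geometric_of_norm_lt_one hlt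
  have h2 := hg.mul_left z⁻¹
  have hterm : ∀ j : ℕ, z⁻¹ * (z⁻¹) ^ j = (z⁻¹) ^ (j + 1) := fun j => (pow_succ' _ _).symm
  rw [funext hterm] at h2
  convert h2 using 1
  have h1z : (1 : ℂ) - z⁻¹ ≠ 0 := by
    intro hh
    have : z⁻¹ = 1 := by linear_combination -hh
    rw [this] at hlt
    simp at hlt
  · rfl
  · rw [← mul_inv, mul_sub, mul_one, mul_inv_cancel₀ hz0]

lemma aux_exp_pow (zz s : ℂ) (m : ℕ) :
    Complex.exp (s * zz) ^ m = Complex.exp (((m : ℂ) * s) * zz) := by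
  rw [← Complex.exp_nat_mul]
  congr 1
  ring

lemma aux_exp_merge (zz s t : ℂ) :
    Complex.exp (s * zz) * Complex.exp (t * zz) = Complex.exp ((s + t) * zz) := by
  rw [← Complex.exp_add]
  congr 1
  ring

lemma aux_norm_exp (d θ : ℝ) : ‖Complex.exp ((d : ℂ) * ((θ : ℂ) * Complex.I))‖ = 1 := by
  rw [Complex.norm_exp]
  have : ((d : ℂ) * ((θ : ℂ) * Complex.I)).re = 0 := by
    simp [Complex.mul_re, Complex.mul_im]
  rw [this, Real.exp_zero]

lemma aux_summable_prod {x : ℝ} (hx0 : 0 ≤ x) (hx1 : x < 1) {M : ℝ} (hM : 0 ≤ M) :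
    Summable fun p : ℕ × ℕ => M * x ^ (p.1 + p.2) := by
  have hg := summable_geometric_of_lt_one hx0 hx1
  have h2 := Summable.mul_of_nonneg (hg.mul_left M) hg
    (fun i => by positivity) (fun i => by positivity)
  apply h2.congr
  intro p
  rw [pow_add]
  ring

lemma aux_ite_collapse (i : ℕ) (X : ℕ → ℂ) :
    ∑' j : ℕ, (if i = j then X j else 0) = X i := by
  have hco : (fun j : ℕ => if i = j then X j else 0)
      = fun j : ℕ => if j = i then X i else 0 := by
    funext j
    by_cases hj : j = i
    · subst hj; simp
    · rw [if_neg fun hh => hj hh.symm, if_neg hj]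
  rw [hco, tsum_ite_eq]


lemma aux_pow_nine (n : ℕ) : ((1:ℝ) + 1/((n:ℝ)+1)) ^ (n+2) ≤ 9 := by
  have hn : (0:ℝ) < (n:ℝ) + 1 := by positivity
  have h1 : (1:ℝ) + 1/((n:ℝ)+1) ≤ Real.exp (1/((n:ℝ)+1)) := by
    have := Real.add_one_le_exp (1/((n:ℝ)+1)); linarith
  have h2 : ((1:ℝ) + 1/((n:ℝ)+1)) ^ (n+2) ≤ Real.exp (1/((n:ℝ)+1)) ^ (n+2) :=
    pow_le_pow_left₀ (by positivity) h1 _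
  have h3 : Real.exp (1/((n:ℝ)+1)) ^ (n+2) = Real.exp (((n+2:ℕ):ℝ) * (1/((n:ℝ)+1))) := by
    rw [Real.exp_nat_mul]
  have h4 : ((n+2:ℕ):ℝ) * (1/((n:ℝ)+1)) ≤ 2 := by
    rw [mul_one_div, div_le_iff₀ hn]
    push_cast
    linarith [Nat.cast_nonneg (α := ℝ) n]
  have h5 := Real.exp_le_exp.mpr h4
  have h6 : Real.exp 2 ≤ 9 := by
    have h7 : Real.exp 2 = Real.exp 1 * Real.exp 1 := by
      rw [← Real.exp_add]; norm_num
    nlinarith [Real.exp_one_lt_d9, Real.exp_pos 1]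
  calc ((1:ℝ) + 1/((n:ℝ)+1)) ^ (n+2) ≤ Real.exp (1/((n:ℝ)+1)) ^ (n+2) := h2
    _ = Real.exp (((n+2:ℕ):ℝ) * (1/((n:ℝ)+1))) := h3
    _ ≤ Real.exp 2 := h5
    _ ≤ 9 := h6

set_option maxHeartbeats 3000000 in
open MeasureTheory in
lemma aux_main (a : A) (h : spectralRadius ℂ a ≤ 1) (C : ℝ) (hC : 0 < C)
    (hritt : ∀ z : ℂ, 1 < ‖z‖ → ‖Ring.inverse (algebraMap ℂ A z - a)‖ ≤ C / ‖z - 1‖)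
    (n : ℕ) : ‖a ^ n‖ ≤ 5 * C ^ 2 := by
  have hπ : (0:ℝ) < Real.pi := Real.pi_pos
  obtain ⟨r, hrdef, hr1⟩ : ∃ r : ℝ, r = 1 + 1/(n+1) ∧ 1 < r := by
    refine ⟨1 + 1/(n+1), rfl, ?_⟩
    have : (0:ℝ) < 1/(n+1) := by positivity
    linarith
  have hr0 : (0:ℝ) < r := by linarith
  have hrC : ((r:ℝ) : ℂ) ≠ 0 := by
    simpa using hr0.ne'
  set w : ℝ → ℂ := fun θ => ((r:ℝ) : ℂ) * Complex.exp ((θ:ℂ) * Complex.I) with hwdef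
  have hwnorm : ∀ θ : ℝ, ‖w θ‖ = r := by
    intro θ
    rw [hwdef]
    simp only [norm_mul, Complex.norm_real, Real.norm_eq_abs,
      Complex.norm_exp_ofReal_mul_I, mul_one, abs_of_pos hr0]
  have hw1 : ∀ θ : ℝ, 1 < ‖w θ‖ := fun θ => by rw [hwnorm]; exact hr1
  have hwinv : ∀ θ : ℝ, (w θ)⁻¹
      = ((r:ℝ):ℂ)⁻¹ * Complex.exp (((-1 : ℂ)) * ((θ:ℂ) * Complex.I)) := by
    intro θ
    rw [hwdef]
    rw [mul_inv, ← Complex.exp_neg, neg_eq_neg_one_mul]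
  obtain ⟨ρ, hρ1, hρr⟩ : ∃ ρ : ℝ, 1 < ρ ∧ ρ < r := ⟨(1+r)/2, by linarith, by linarith⟩
  obtain ⟨M, hM1, hM⟩ := aux_growth a h hρ1
  obtain ⟨x, hxdef, hx0, hx1⟩ : ∃ x : ℝ, x = ρ/r ∧ 0 ≤ x ∧ x < 1 :=
    ⟨ρ/r, rfl, by positivity, (div_lt_one hr0).mpr hρr⟩
  have hsumnorm : ∀ θ : ℝ, Summable fun k : ℕ => ‖(w θ)⁻¹ ^ (k + 1) • a ^ k‖ :=
    fun θ => aux_summable_norm a h (hw1 θ)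
  -- the summand family
  set fA : ℕ × ℕ → ℝ → A := fun p θ =>
    ((((r:ℝ):ℂ)⁻¹) ^ (p.1 + p.2 + 2) *
      Complex.exp (((((n:ℤ) - (p.1 + p.2 : ℕ) : ℤ)) : ℂ) * ((θ:ℂ) * Complex.I))) •
      a ^ (p.1 + p.2) with hfAdef
  -- the key scalar computation
  have hterm : ∀ (θ : ℝ) (p : ℕ × ℕ),
      Complex.exp (((n:ℂ) + 2) * ((θ:ℂ) * Complex.I)) •
        (((w θ)⁻¹ ^ (p.1 + 1) • a ^ p.1) * ((w θ)⁻¹ ^ (p.2 + 1) • a ^ p.2))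
      = fA p θ := by
    intro θ p
    rw [hfAdef]
    rw [smul_mul_smul_comm, smul_smul, ← pow_add a]
    congr 1
    rw [hwinv θ, mul_pow, mul_pow, aux_exp_pow, aux_exp_pow]
    have hre : Complex.exp (((n:ℂ) + 2) * ((θ:ℂ) * Complex.I)) *
        ((((r:ℝ):ℂ)⁻¹ ^ (p.1 + 1) *
            Complex.exp ((((p.1 + 1 : ℕ):ℂ) * (-1)) * ((θ:ℂ) * Complex.I))) *
          (((r:ℝ):ℂ)⁻¹ ^ (p.2 + 1) *
            Complex.exp ((((p.2 + 1 : ℕ):ℂ) * (-1)) * ((θ:ℂ) * Complex.I))))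
        = (((r:ℝ):ℂ)⁻¹ ^ (p.1 + 1) * ((r:ℝ):ℂ)⁻¹ ^ (p.2 + 1)) *
          (Complex.exp (((n:ℂ) + 2) * ((θ:ℂ) * Complex.I)) *
            Complex.exp ((((p.1 + 1 : ℕ):ℂ) * (-1)) * ((θ:ℂ) * Complex.I)) *
            Complex.exp ((((p.2 + 1 : ℕ):ℂ) * (-1)) * ((θ:ℂ) * Complex.I))) := by
      ring
    rw [hre, aux_exp_merge, aux_exp_merge, ← pow_add]
    rw [show (p.1 + 1) + (p.2 + 1) = p.1 + p.2 + 2 by omega]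
    congr 2
    push_cast
    ring
  -- pointwise expansion of the integrand
  have hFeq : ∀ θ : ℝ,
      Complex.exp (((n:ℂ) + 2) * ((θ:ℂ) * Complex.I)) •
        (Ring.inverse (algebraMap ℂ A (w θ) - a)) ^ 2
      = ∑' p : ℕ × ℕ, fA p θ := by
    intro θ
    have hR := (aux_hasSum a h (hw1 θ)).tsum_eq
    have hmulsum := summable_mul_of_summable_norm (hsumnorm θ) (hsumnorm θ)
    have hprod := tsum_mul_tsum_of_summable_norm (hsumnorm θ) (hsumnorm θ)
    have hsq : (Ring.inverse (algebraMap ℂ A (w θ) - a)) ^ 2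
        = ∑' p : ℕ × ℕ, ((w θ)⁻¹ ^ (p.1 + 1) • a ^ p.1) * ((w θ)⁻¹ ^ (p.2 + 1) • a ^ p.2) := by
      rw [sq, ← hR, hprod]
    rw [hsq, ← (hmulsum.hasSum.const_smul
      (Complex.exp (((n:ℂ) + 2) * ((θ:ℂ) * Complex.I)))).tsum_eq]
    exact tsum_congr fun p => hterm θ p
  -- measurability
  have hmeas : ∀ p : ℕ × ℕ, AEStronglyMeasurable (fA p)
      (volume.restrict (Set.Ioc (0:ℝ) (2 * Real.pi))) := by
    intro p
    apply Continuous.aestronglyMeasurable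
    rw [hfAdef]
    fun_prop
  -- norm bound on summands
  have hfAbound : ∀ (p : ℕ × ℕ) (θ : ℝ), ‖fA p θ‖ ≤ M * x ^ (p.1 + p.2) := by
    intro p θ
    rw [hfAdef]
    have h1 : ‖(((r:ℝ):ℂ)⁻¹) ^ (p.1 + p.2 + 2)‖ = (r⁻¹) ^ (p.1 + p.2 + 2) := by
      rw [norm_pow, norm_inv, Complex.norm_real, Real.norm_eq_abs, abs_of_pos hr0]
    have h2 : ‖Complex.exp (((((n:ℤ) - (p.1 + p.2 : ℕ) : ℤ)) : ℂ) * ((θ:ℂ) * Complex.I))‖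
        = 1 := by
      have : ((((n:ℤ) - (p.1 + p.2 : ℕ) : ℤ)) : ℂ)
          = (((((n:ℤ) - (p.1 + p.2 : ℕ) : ℤ) : ℝ)) : ℂ) := by push_cast; ring
      rw [this, aux_norm_exp]
    rw [norm_smul, norm_mul, h1, h2, mul_one]
    have h3 : (r⁻¹) ^ (p.1 + p.2 + 2) ≤ (r⁻¹) ^ (p.1 + p.2) := by
      apply pow_le_pow_of_le_one (by positivity) (by
        rw [inv_le_one_iff₀]; right; linarith) (by omega)
    have h4 : ‖a ^ (p.1 + p.2)‖ ≤ M * ρ ^ (p.1 + p.2) := hM _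
    calc (r⁻¹) ^ (p.1 + p.2 + 2) * ‖a ^ (p.1 + p.2)‖
        ≤ (r⁻¹) ^ (p.1 + p.2) * (M * ρ ^ (p.1 + p.2)) := by
          apply mul_le_mul h3 h4 (norm_nonneg _) (by positivity)
      _ = M * x ^ (p.1 + p.2) := by
          rw [hxdef, div_pow, inv_pow]
          field_simp
  -- the series of lintegrals is finite
  have hlint : ∑' p : ℕ × ℕ, ∫⁻ θ, ‖fA p θ‖₊
      ∂(volume.restrict (Set.Ioc (0:ℝ) (2 * Real.pi))) ≠ ⊤ := by
    have hb : ∀ p : ℕ × ℕ, ∫⁻ θ, ‖fA p θ‖₊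
        ∂(volume.restrict (Set.Ioc (0:ℝ) (2 * Real.pi)))
        ≤ ENNReal.ofReal ((M * x ^ (p.1 + p.2)) * (2 * Real.pi)) := by
      intro p
      have h1 : ∫⁻ θ, ‖fA p θ‖₊ ∂(volume.restrict (Set.Ioc (0:ℝ) (2 * Real.pi)))
          ≤ ∫⁻ _, ENNReal.ofReal (M * x ^ (p.1 + p.2))
            ∂(volume.restrict (Set.Ioc (0:ℝ) (2 * Real.pi))) := by
        apply lintegral_mono
        intro θ
        dsimp only
        rw [← ENNReal.ofReal_coe_nnreal, coe_nnnorm]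
        exact ENNReal.ofReal_le_ofReal (hfAbound p θ)
      refine h1.trans ?_
      rw [lintegral_const, Measure.restrict_apply_univ, Real.volume_Ioc]
      rw [← ENNReal.ofReal_mul (by positivity)]
      apply ENNReal.ofReal_le_ofReal
      rw [sub_zero]
    have hsum : Summable fun p : ℕ × ℕ => (M * x ^ (p.1 + p.2)) * (2 * Real.pi) :=
      (aux_summable_prod hx0 hx1 (by linarith)).mul_right _
    have hle : ∑' p : ℕ × ℕ, ∫⁻ θ, ‖fA p θ‖₊
        ∂(volume.restrict (Set.Ioc (0:ℝ) (2 * Real.pi)))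
        ≤ ENNReal.ofReal (∑' p : ℕ × ℕ, (M * x ^ (p.1 + p.2)) * (2 * Real.pi)) := by
      calc ∑' p : ℕ × ℕ, ∫⁻ θ, ‖fA p θ‖₊
          ∂(volume.restrict (Set.Ioc (0:ℝ) (2 * Real.pi)))
          ≤ ∑' p : ℕ × ℕ, ENNReal.ofReal ((M * x ^ (p.1 + p.2)) * (2 * Real.pi)) :=
            ENNReal.tsum_le_tsum hb
        _ = ENNReal.ofReal (∑' p : ℕ × ℕ, (M * x ^ (p.1 + p.2)) * (2 * Real.pi)) :=
            (ENNReal.ofReal_tsum_of_nonneg (fun p => by positivity) hsum).symm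
    exact ne_top_of_le_ne_top ENNReal.ofReal_ne_top hle
  -- value of each integral
  have hintp : ∀ p : ℕ × ℕ,
      (∫ θ in Set.Ioc (0:ℝ) (2 * Real.pi), fA p θ)
      = (if p.1 + p.2 = n
          then (((2 * Real.pi) * (r⁻¹) ^ (n + 2) : ℝ) : ℂ) • a ^ n else 0) := by
    intro p
    rw [hfAdef]
    rw [integral_smul_const, integral_const_mul, aux_int_exp ((n:ℤ) - (p.1 + p.2 : ℕ))]
    by_cases hpn : p.1 + p.2 = n
    · rw [if_pos hpn, if_pos (by rw [hpn]; simp), hpn]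
      congr 1
      push_cast
      ring
    · rw [if_neg hpn, if_neg (by
        intro hh
        apply hpn
        have : ((n:ℤ) - (p.1 + p.2 : ℕ) : ℤ) = 0 := by exact_mod_cast hh
        omega)]
      rw [mul_zero, zero_smul]
  -- the representation formula
  have hrep : (∫ θ in Set.Ioc (0:ℝ) (2 * Real.pi),
        Complex.exp (((n:ℂ) + 2) * ((θ:ℂ) * Complex.I)) •
          (Ring.inverse (algebraMap ℂ A (w θ) - a)) ^ 2)
      = (n + 1) • ((((2 * Real.pi) * (r⁻¹) ^ (n + 2) : ℝ) : ℂ) • a ^ n) := by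
    rw [show (fun θ : ℝ => Complex.exp (((n:ℂ) + 2) * ((θ:ℂ) * Complex.I)) •
        (Ring.inverse (algebraMap ℂ A (w θ) - a)) ^ 2)
      = fun θ : ℝ => ∑' p : ℕ × ℕ, fA p θ from funext hFeq]
    rw [integral_tsum hmeas hlint]
    rw [tsum_congr hintp]
    exact aux_tsum_ite n _
  -- ===== Poisson integral computation =====
  set gs : ℕ × ℕ → ℝ → ℂ := fun p θ =>
    (((r:ℝ):ℂ)⁻¹) ^ (p.1 + p.2 + 2) *
      Complex.exp ((((p.2:ℤ) - (p.1:ℤ) : ℤ) : ℂ) * ((θ:ℂ) * Complex.I)) with hgsdef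
  have hconj : ∀ θ : ℝ, (starRingEnd ℂ) (w θ)
      = ((r:ℝ):ℂ) * Complex.exp ((-1:ℂ) * ((θ:ℂ) * Complex.I)) := by
    intro θ
    rw [hwdef]
    simp only [map_mul, Complex.conj_ofReal]
    congr 1
    rw [← Complex.exp_conj]
    congr 1
    simp only [map_mul, Complex.conj_ofReal, Complex.conj_I]
    ring
  have hconjnorm : ∀ θ : ℝ, 1 < ‖(starRingEnd ℂ) (w θ)‖ := by
    intro θ
    rw [RCLike.norm_conj]
    exact hw1 θ
  have hconjinv : ∀ θ : ℝ, ((starRingEnd ℂ) (w θ))⁻¹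
      = ((r:ℝ):ℂ)⁻¹ * Complex.exp ((1:ℂ) * ((θ:ℂ) * Complex.I)) := by
    intro θ
    rw [hconj θ, mul_inv, ← Complex.exp_neg]
    congr 2
    ring
  have hwne1 : ∀ θ : ℝ, w θ - 1 ≠ 0 := by
    intro θ hh
    have : w θ = 1 := by linear_combination hh
    have h2 := hwnorm θ
    rw [this, norm_one] at h2
    linarith
  have hsumc : ∀ θ : ℝ, Summable fun j : ℕ => ‖(w θ)⁻¹ ^ (j + 1)‖ := by
    intro θ
    have : (fun j : ℕ => ‖(w θ)⁻¹ ^ (j + 1)‖) = fun j : ℕ => r⁻¹ * (r⁻¹) ^ j := by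
      funext j
      rw [norm_pow, norm_inv, hwnorm, pow_succ']
    rw [this]
    exact (summable_geometric_of_lt_one (by positivity)
      ((inv_lt_one₀ hr0).mpr hr1)).mul_left _
  have hsumc' : ∀ θ : ℝ, Summable fun j : ℕ => ‖((starRingEnd ℂ) (w θ))⁻¹ ^ (j + 1)‖ := by
    intro θ
    have : (fun j : ℕ => ‖((starRingEnd ℂ) (w θ))⁻¹ ^ (j + 1)‖)
        = fun j : ℕ => r⁻¹ * (r⁻¹) ^ j := by
      funext j
      rw [norm_pow, norm_inv, RCLike.norm_conj, hwnorm, pow_succ']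
    rw [this]
    exact (summable_geometric_of_lt_one (by positivity)
      ((inv_lt_one₀ hr0).mpr hr1)).mul_left _
  have hgs_eq : ∀ θ : ℝ, ((‖w θ - 1‖ ^ 2 : ℝ) : ℂ)⁻¹ = ∑' p : ℕ × ℕ, gs p θ := by
    intro θ
    have h1 := aux_scalar_inv (hw1 θ)
    have h2 := aux_scalar_inv (hconjnorm θ)
    have hLHS : ((‖w θ - 1‖ ^ 2 : ℝ) : ℂ) = (w θ - 1) * (starRingEnd ℂ) (w θ - 1) := by
      have hns : ‖w θ - 1‖ ^ 2 = Complex.normSq (w θ - 1) := by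
        exact Complex.sq_norm _
      rw [hns, Complex.mul_conj]
    rw [hLHS, mul_inv, map_sub, map_one]
    rw [← h1.tsum_eq, ← h2.tsum_eq, tsum_mul_tsum_of_summable_norm (hsumc θ) (hsumc' θ)]
    apply tsum_congr
    intro p
    rw [hgsdef]
    rw [hwinv θ, hconjinv θ, mul_pow, mul_pow, aux_exp_pow, aux_exp_pow]
    have hre2 : (((r:ℝ):ℂ)⁻¹ ^ (p.1 + 1) *
          Complex.exp ((((p.1 + 1 : ℕ):ℂ) * (-1)) * ((θ:ℂ) * Complex.I))) *
        (((r:ℝ):ℂ)⁻¹ ^ (p.2 + 1) *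
          Complex.exp ((((p.2 + 1 : ℕ):ℂ) * 1) * ((θ:ℂ) * Complex.I)))
        = (((r:ℝ):ℂ)⁻¹ ^ (p.1 + 1) * ((r:ℝ):ℂ)⁻¹ ^ (p.2 + 1)) *
          (Complex.exp ((((p.1 + 1 : ℕ):ℂ) * (-1)) * ((θ:ℂ) * Complex.I)) *
            Complex.exp ((((p.2 + 1 : ℕ):ℂ) * 1) * ((θ:ℂ) * Complex.I))) := by
      ring
    rw [hre2, aux_exp_merge, ← pow_add]
    rw [show (p.1 + 1) + (p.2 + 1) = p.1 + p.2 + 2 by omega]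
    congr 2
    push_cast
    ring
  have hmeas2 : ∀ p : ℕ × ℕ, AEStronglyMeasurable (gs p)
      (volume.restrict (Set.Ioc (0:ℝ) (2 * Real.pi))) := by
    intro p
    apply Continuous.aestronglyMeasurable
    rw [hgsdef]
    fun_prop
  have hgsbound : ∀ (p : ℕ × ℕ) (θ : ℝ), ‖gs p θ‖ ≤ 1 * (r⁻¹) ^ (p.1 + p.2) := by
    intro p θ
    rw [hgsdef]
    have h1 : ‖(((r:ℝ):ℂ)⁻¹) ^ (p.1 + p.2 + 2)‖ = (r⁻¹) ^ (p.1 + p.2 + 2) := by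
      rw [norm_pow, norm_inv, Complex.norm_real, Real.norm_eq_abs, abs_of_pos hr0]
    have h2 : ‖Complex.exp ((((p.2:ℤ) - (p.1:ℤ) : ℤ) : ℂ) * ((θ:ℂ) * Complex.I))‖ = 1 := by
      have : (((p.2:ℤ) - (p.1:ℤ) : ℤ) : ℂ) = ((((p.2:ℤ) - (p.1:ℤ) : ℤ) : ℝ) : ℂ) := by
        push_cast; ring
      rw [this, aux_norm_exp]
    rw [norm_mul, h1, h2, mul_one, one_mul]
    apply pow_le_pow_of_le_one (by positivity)
      (by rw [inv_le_one_iff₀]; right; linarith) (by omega)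
  have hlint2 : ∑' p : ℕ × ℕ, ∫⁻ θ, ‖gs p θ‖₊
      ∂(volume.restrict (Set.Ioc (0:ℝ) (2 * Real.pi))) ≠ ⊤ := by
    have hb : ∀ p : ℕ × ℕ, ∫⁻ θ, ‖gs p θ‖₊
        ∂(volume.restrict (Set.Ioc (0:ℝ) (2 * Real.pi)))
        ≤ ENNReal.ofReal ((1 * (r⁻¹) ^ (p.1 + p.2)) * (2 * Real.pi)) := by
      intro p
      have h1 : ∫⁻ θ, ‖gs p θ‖₊ ∂(volume.restrict (Set.Ioc (0:ℝ) (2 * Real.pi)))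
          ≤ ∫⁻ _, ENNReal.ofReal (1 * (r⁻¹) ^ (p.1 + p.2))
            ∂(volume.restrict (Set.Ioc (0:ℝ) (2 * Real.pi))) := by
        apply lintegral_mono
        intro θ
        dsimp only
        rw [← ENNReal.ofReal_coe_nnreal, coe_nnnorm]
        exact ENNReal.ofReal_le_ofReal (hgsbound p θ)
      refine h1.trans ?_
      rw [lintegral_const, Measure.restrict_apply_univ, Real.volume_Ioc]
      rw [← ENNReal.ofReal_mul (by positivity)]
      apply ENNReal.ofReal_le_ofReal
      rw [sub_zero]
    have hsum : Summable fun p : ℕ × ℕ => (1 * (r⁻¹) ^ (p.1 + p.2)) * (2 * Real.pi) :=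
      (aux_summable_prod (by positivity) ((inv_lt_one₀ hr0).mpr hr1)
        (by norm_num : (0:ℝ) ≤ 1)).mul_right _
    have hle : ∑' p : ℕ × ℕ, ∫⁻ θ, ‖gs p θ‖₊
        ∂(volume.restrict (Set.Ioc (0:ℝ) (2 * Real.pi)))
        ≤ ENNReal.ofReal (∑' p : ℕ × ℕ, (1 * (r⁻¹) ^ (p.1 + p.2)) * (2 * Real.pi)) := by
      calc ∑' p : ℕ × ℕ, ∫⁻ θ, ‖gs p θ‖₊
          ∂(volume.restrict (Set.Ioc (0:ℝ) (2 * Real.pi)))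
          ≤ ∑' p : ℕ × ℕ, ENNReal.ofReal ((1 * (r⁻¹) ^ (p.1 + p.2)) * (2 * Real.pi)) :=
            ENNReal.tsum_le_tsum hb
        _ = ENNReal.ofReal (∑' p : ℕ × ℕ, (1 * (r⁻¹) ^ (p.1 + p.2)) * (2 * Real.pi)) :=
            (ENNReal.ofReal_tsum_of_nonneg (fun p => by positivity) hsum).symm
    exact ne_top_of_le_ne_top ENNReal.ofReal_ne_top hle
  have hint2p : ∀ p : ℕ × ℕ,
      (∫ θ in Set.Ioc (0:ℝ) (2 * Real.pi), gs p θ)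
      = (if p.1 = p.2
          then (((2 * Real.pi : ℝ)) : ℂ) * (((r:ℝ):ℂ)⁻¹) ^ (p.1 + p.2 + 2) else 0) := by
    intro p
    rw [hgsdef]
    rw [integral_const_mul, aux_int_exp ((p.2:ℤ) - (p.1:ℤ))]
    by_cases hpq : p.1 = p.2
    · rw [if_pos (by rw [hpq]; simp), if_pos hpq]
      ring
    · rw [if_neg (by
        intro hh
        apply hpq
        have : ((p.2:ℤ) - (p.1:ℤ) : ℤ) = 0 := by exact_mod_cast hh
        omega), if_neg hpq, mul_zero]
  have hcompl : (∫ θ in Set.Ioc (0:ℝ) (2 * Real.pi), ((‖w θ - 1‖ ^ 2 : ℝ) : ℂ)⁻¹)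
      = (((2 * Real.pi) * (r ^ 2 - 1)⁻¹ : ℝ) : ℂ) := by
    rw [show (fun θ : ℝ => ((‖w θ - 1‖ ^ 2 : ℝ) : ℂ)⁻¹)
      = fun θ : ℝ => ∑' p : ℕ × ℕ, gs p θ from funext hgs_eq]
    rw [integral_tsum hmeas2 hlint2]
    rw [tsum_congr hint2p]
    have hts : Summable fun p : ℕ × ℕ =>
        (if p.1 = p.2
          then (((2 * Real.pi : ℝ)) : ℂ) * (((r:ℝ):ℂ)⁻¹) ^ (p.1 + p.2 + 2) else 0) := by
      apply Summable.of_norm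
      apply Summable.of_nonneg_of_le (fun p => norm_nonneg _)
        (fun p => ?_) (aux_summable_prod ((by positivity : (0:ℝ) ≤ r⁻¹))
          ((inv_lt_one₀ hr0).mpr hr1) (by positivity : (0:ℝ) ≤ 2 * Real.pi))
      by_cases hpq : p.1 = p.2
      · rw [if_pos hpq, norm_mul]
        have h1 : ‖(((2 * Real.pi : ℝ)) : ℂ)‖ = 2 * Real.pi := by
          rw [Complex.norm_real, Real.norm_eq_abs, abs_of_pos (by positivity)]
        have h2 : ‖(((r:ℝ):ℂ)⁻¹) ^ (p.1 + p.2 + 2)‖ = (r⁻¹) ^ (p.1 + p.2 + 2) := by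
          rw [norm_pow, norm_inv, Complex.norm_real, Real.norm_eq_abs, abs_of_pos hr0]
        rw [h1, h2]
        have h3 : (r⁻¹) ^ (p.1 + p.2 + 2) ≤ (r⁻¹) ^ (p.1 + p.2) :=
          pow_le_pow_of_le_one (by positivity)
            (by rw [inv_le_one_iff₀]; right; linarith) (by omega)
        calc 2 * Real.pi * (r⁻¹) ^ (p.1 + p.2 + 2)
            ≤ 2 * Real.pi * (r⁻¹) ^ (p.1 + p.2) := by
              apply mul_le_mul_of_nonneg_left h3 (by positivity)
          _ = 2 * Real.pi * r⁻¹ ^ (p.1 + p.2) := rfl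
      · rw [if_neg hpq, norm_zero]
        positivity
    rw [hts.tsum_prod' (fun b => hts.prod_factor b)]
    have hinner : ∀ i : ℕ,
        (∑' j : ℕ, (if i = j
          then (((2 * Real.pi : ℝ)) : ℂ) * (((r:ℝ):ℂ)⁻¹) ^ (i + j + 2) else 0))
        = (((2 * Real.pi : ℝ)) : ℂ) * ((((r:ℝ):ℂ) ^ 2)⁻¹) ^ (i + 1) := by
      intro i
      rw [aux_ite_collapse i
        (fun j => (((2 * Real.pi : ℝ)) : ℂ) * (((r:ℝ):ℂ)⁻¹) ^ (i + j + 2))]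
      rw [show i + i + 2 = 2 * (i + 1) by omega, pow_mul, ← inv_pow]
    rw [tsum_congr hinner]
    rw [tsum_mul_left]
    have hr2 : 1 < ‖((r:ℝ):ℂ) ^ 2‖ := by
      rw [norm_pow, Complex.norm_real, Real.norm_eq_abs, abs_of_pos hr0]
      nlinarith
    rw [(aux_scalar_inv hr2).tsum_eq]
    rw [show ((r:ℝ):ℂ) ^ 2 - 1 = (((r ^ 2 - 1 : ℝ)) : ℂ) by push_cast; ring]
    rw [← Complex.ofReal_inv, ← Complex.ofReal_mul]
  have hpois : (∫ θ in Set.Ioc (0:ℝ) (2 * Real.pi), (‖w θ - 1‖ ^ 2)⁻¹)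
      = (2 * Real.pi) * (r ^ 2 - 1)⁻¹ := by
    apply Complex.ofReal_injective
    have h2 := integral_ofReal (𝕜 := ℂ) (f := fun θ : ℝ => (‖w θ - 1‖ ^ 2)⁻¹)
      (μ := volume.restrict (Set.Ioc (0:ℝ) (2 * Real.pi)))
    have h1 : (∫ θ in Set.Ioc (0:ℝ) (2 * Real.pi), (((‖w θ - 1‖ ^ 2)⁻¹ : ℝ) : ℂ))
        = (((2 * Real.pi) * (r ^ 2 - 1)⁻¹ : ℝ) : ℂ) := by
      rw [show (fun θ : ℝ => (((‖w θ - 1‖ ^ 2)⁻¹ : ℝ) : ℂ))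
        = fun θ : ℝ => ((‖w θ - 1‖ ^ 2 : ℝ) : ℂ)⁻¹ from funext fun θ => by push_cast; ring]
      exact hcompl
    exact h2.symm.trans h1
  -- ===== norm bound =====
  have hRb : ∀ θ : ℝ, ‖Complex.exp (((n:ℂ) + 2) * ((θ:ℂ) * Complex.I)) •
      (Ring.inverse (algebraMap ℂ A (w θ) - a)) ^ 2‖
      ≤ C ^ 2 * (‖w θ - 1‖ ^ 2)⁻¹ := by
    intro θ
    rw [norm_smul]
    have he : ‖Complex.exp (((n:ℂ) + 2) * ((θ:ℂ) * Complex.I))‖ = 1 := by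
      rw [show ((n:ℂ) + 2) = (((n:ℝ) + 2 : ℝ) : ℂ) by push_cast; ring, aux_norm_exp]
    rw [he, one_mul, sq]
    have hrt := hritt (w θ) (hw1 θ)
    have hn1 : 0 < ‖w θ - 1‖ := norm_pos_iff.mpr (hwne1 θ)
    calc ‖Ring.inverse (algebraMap ℂ A (w θ) - a) *
          Ring.inverse (algebraMap ℂ A (w θ) - a)‖
        ≤ ‖Ring.inverse (algebraMap ℂ A (w θ) - a)‖ *
          ‖Ring.inverse (algebraMap ℂ A (w θ) - a)‖ := norm_mul_le _ _
      _ ≤ (C / ‖w θ - 1‖) * (C / ‖w θ - 1‖) :=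
          mul_le_mul hrt hrt (norm_nonneg _) (div_nonneg hC.le hn1.le)
      _ = C ^ 2 * (‖w θ - 1‖ ^ 2)⁻¹ := by
          rw [div_mul_div_comm, ← sq, ← sq, div_eq_mul_inv]
  have hwcont : Continuous w := by
    rw [hwdef]
    fun_prop
  have hgb_int : IntegrableOn (fun θ : ℝ => C ^ 2 * (‖w θ - 1‖ ^ 2)⁻¹)
      (Set.Ioc (0:ℝ) (2 * Real.pi)) volume := by
    apply Continuous.integrableOn_Ioc
    apply continuous_const.mul
    apply Continuous.inv₀
    · exact ((hwcont.sub continuous_const).norm.pow 2)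
    · intro θ
      have : 0 < ‖w θ - 1‖ := norm_pos_iff.mpr (hwne1 θ)
      positivity
  have hnb : ‖∫ θ in Set.Ioc (0:ℝ) (2 * Real.pi),
        Complex.exp (((n:ℂ) + 2) * ((θ:ℂ) * Complex.I)) •
          (Ring.inverse (algebraMap ℂ A (w θ) - a)) ^ 2‖
      ≤ C ^ 2 * ((2 * Real.pi) * (r ^ 2 - 1)⁻¹) := by
    calc ‖∫ θ in Set.Ioc (0:ℝ) (2 * Real.pi),
          Complex.exp (((n:ℂ) + 2) * ((θ:ℂ) * Complex.I)) •
            (Ring.inverse (algebraMap ℂ A (w θ) - a)) ^ 2‖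
        ≤ ∫ θ in Set.Ioc (0:ℝ) (2 * Real.pi),
            ‖Complex.exp (((n:ℂ) + 2) * ((θ:ℂ) * Complex.I)) •
              (Ring.inverse (algebraMap ℂ A (w θ) - a)) ^ 2‖ :=
          norm_integral_le_integral_norm _
      _ ≤ ∫ θ in Set.Ioc (0:ℝ) (2 * Real.pi), C ^ 2 * (‖w θ - 1‖ ^ 2)⁻¹ :=
          integral_mono_of_nonneg (Filter.Eventually.of_forall fun θ => norm_nonneg _)
            hgb_int (Filter.Eventually.of_forall fun θ => hRb θ)
      _ = C ^ 2 * ((2 * Real.pi) * (r ^ 2 - 1)⁻¹) := by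
          rw [integral_const_mul, hpois]
  -- ===== assembly =====
  have hQpos : 0 < r ^ 2 - 1 := by nlinarith
  have hc1pos : 0 < (2 * Real.pi) * (r⁻¹) ^ (n + 2) := by positivity
  have hnormrep : ((n:ℝ) + 1) * ((2 * Real.pi) * (r⁻¹) ^ (n + 2)) * ‖a ^ n‖
      = ‖(n + 1) • ((((2 * Real.pi) * (r⁻¹) ^ (n + 2) : ℝ) : ℂ) • a ^ n)‖ := by
    rw [← Nat.cast_smul_eq_nsmul ℝ (n + 1), norm_smul, norm_smul, Real.norm_eq_abs,
      Complex.norm_real, Real.norm_eq_abs, abs_of_pos hc1pos,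
      abs_of_pos (by positivity : (0:ℝ) < ((n + 1 : ℕ) : ℝ))]
    push_cast
    ring
  have hfin : ((n:ℝ) + 1) * ((2 * Real.pi) * (r⁻¹) ^ (n + 2)) * ‖a ^ n‖
      ≤ C ^ 2 * ((2 * Real.pi) * (r ^ 2 - 1)⁻¹) := by
    rw [hnormrep, ← hrep]
    exact hnb
  have hPpos : (0:ℝ) < r ^ (n + 2) := by positivity
  have hP9 : r ^ (n + 2) ≤ 9 := by
    rw [hrdef]
    exact aux_pow_nine n
  have hplus : ((n:ℝ) + 1) * (r ^ 2 - 1) = r + 1 := by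
    rw [hrdef]
    field_simp
    ring
  have hinvP : (r⁻¹) ^ (n + 2) = (r ^ (n + 2))⁻¹ := by rw [inv_pow]
  rw [hinvP] at hfin
  have e3 := mul_le_mul_of_nonneg_right hfin
    (by positivity : (0:ℝ) ≤ r ^ (n + 2) * (r ^ 2 - 1))
  have e1 : ((n:ℝ) + 1) * ((2 * Real.pi) * (r ^ (n + 2))⁻¹) * ‖a ^ n‖ *
      (r ^ (n + 2) * (r ^ 2 - 1))
      = (2 * Real.pi) * (‖a ^ n‖ * (((n:ℝ) + 1) * (r ^ 2 - 1))) := by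
    field_simp
  have e2 : C ^ 2 * ((2 * Real.pi) * (r ^ 2 - 1)⁻¹) * (r ^ (n + 2) * (r ^ 2 - 1))
      = (2 * Real.pi) * (C ^ 2 * r ^ (n + 2)) := by
    field_simp
  rw [e1, e2, hplus] at e3
  have e4 : ‖a ^ n‖ * (r + 1) ≤ C ^ 2 * r ^ (n + 2) :=
    le_of_mul_le_mul_left e3 (by positivity)
  nlinarith [norm_nonneg (a ^ n), sq_nonneg C, hP9, hr1, e4, hC]

end Aux

/-- A Ritt operator is power-bounded. -/
theorem stmt1 {X : Type*} [NormedAddCommGroup X] [NormedSpace ℂ X] [CompleteSpace X]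
    (T : X →L[ℂ] X) (hspr : spectralRadius ℂ T ≤ 1) (C : ℝ) (hC : 0 < C)
    (hritt : ∀ z : ℂ, 1 < ‖z‖ → z ∈ resolventSet ℂ T ∧
      ‖Ring.inverse (algebraMap ℂ (X →L[ℂ] X) z - T)‖ ≤ C / ‖z - 1‖) :
    ∃ K : ℝ, ∀ n : ℕ, ‖T ^ n‖ ≤ K := by
  exact ⟨5 * C ^ 2, fun n => aux_main T hspr C hC (fun z hz => (hritt z hz).2) n⟩
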